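/- Let M ⊂ ℝⁿ be a path-connected set such that for every permutation σ of coordinates, either σM = M or σM ∩ M = ∅. Then the spectral lift λ⁻¹(M^sym) of the symmetrization M^sym := ⋃_σ σM is a path-connected subset of the symmetric matrices Sⁿ. -/

import Mathlib

open Matrix

attribute [local instance] Matrix.normedAddCommGroup Matrix.normedSpace

noncomputable section PCLAux

namespace PCL

variable {n : ℕ}

/-- Householder matrix of the reflection across the hyperplane orthogonal to `v`. -/
noncomputable def Hmat (v : Fin n → ℝ) : Matrix (Fin n) (Fin n) ℝ :=
  1 - (2 / (v ⬝ᵥ v)) • vecMulVec v v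

lemma Hmat_zero : Hmat (0 : Fin n → ℝ) = 1 := by
  simp [Hmat]

lemma Hmat_transpose (v : Fin n → ℝ) : (Hmat v)ᵀ = Hmat v := by
  unfold Hmat
  ext i j
  simp [vecMulVec_apply, mul_comm, one_apply, eq_comm]

lemma vecMulVec_sq (v : Fin n → ℝ) :
    vecMulVec v v * vecMulVec v v = (v ⬝ᵥ v) • vecMulVec v v := by
  ext i j
  simp only [mul_apply, vecMulVec_apply, Matrix.smul_apply, smul_eq_mul, dotProduct]
  rw [Finset.sum_mul]
  exact Finset.sum_congr rfl fun k _ => by ring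

lemma Hmat_mul_self (v : Fin n → ℝ) : Hmat v * Hmat v = 1 := by
  by_cases hv : v ⬝ᵥ v = 0
  · have hv0 : v = 0 := dotProduct_self_eq_zero.mp hv
    rw [hv0, Hmat_zero, one_mul]
  · set c : ℝ := 2 / (v ⬝ᵥ v) with hc
    set P := vecMulVec v v with hP
    have expand : (1 - c • P) * (1 - c • P) = 1 - c • P - c • P + (c * c) • (P * P) := by
      rw [sub_mul, mul_sub, mul_sub, one_mul, mul_one, one_mul, smul_mul_smul_comm]
      abel
    have hcoef : c * c * (v ⬝ᵥ v) = c + c := by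
      have hc2 : c * (v ⬝ᵥ v) = 2 := by rw [hc]; exact div_mul_cancel₀ 2 hv
      rw [mul_assoc, hc2]; ring
    unfold Hmat
    rw [← hP, ← hc, expand, vecMulVec_sq, ← hP, smul_smul, hcoef, add_smul]
    abel

lemma Hmat_orth (v : Fin n → ℝ) : (Hmat v)ᵀ * Hmat v = 1 := by
  rw [Hmat_transpose]; exact Hmat_mul_self v

lemma vecMulVec_mulVec' (v w x : Fin n → ℝ) :
    vecMulVec v w *ᵥ x = (w ⬝ᵥ x) • v := by
  ext i
  simp only [mulVec, dotProduct, vecMulVec_apply, Pi.smul_apply, smul_eq_mul]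
  rw [Finset.sum_mul]
  exact Finset.sum_congr rfl fun k _ => by ring

lemma Hmat_mulVec (v x : Fin n → ℝ) :
    Hmat v *ᵥ x = x - (2 * (v ⬝ᵥ x) / (v ⬝ᵥ v)) • v := by
  unfold Hmat
  rw [sub_mulVec, one_mulVec, smul_mulVec, vecMulVec_mulVec', smul_smul]
  congr 1
  ring

lemma dotProduct_single_one (i₀ : Fin n) :
    (Pi.single i₀ 1 : Fin n → ℝ) ⬝ᵥ (Pi.single i₀ 1 : Fin n → ℝ) = 1 := by
  simp [dotProduct, Pi.single_apply]

lemma Hmat_single (i₀ : Fin n) :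
    Hmat (Pi.single i₀ 1) = diagonal (fun i => if i = i₀ then (-1 : ℝ) else 1) := by
  ext i j
  rw [Hmat, dotProduct_single_one]
  by_cases hij : i = j <;> by_cases hi : i = i₀ <;> by_cases hj : j = i₀ <;>
    simp_all [vecMulVec_apply, Pi.single_apply, diagonal, one_apply] <;> norm_num

lemma sign_pow_eq (i₀ : Fin n) (m : ℕ) :
    (diagonal (fun i => if i = i₀ then (-1 : ℝ) else 1)) ^ m =
      diagonal (fun i => (if i = i₀ then (-1 : ℝ) else 1) ^ m) := by
  rw [diagonal_pow]
  rfl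

lemma sign_sq (a : ℝ) (h : a = -1 ∨ a = 1) (m : ℕ) : a ^ m * a ^ m = 1 := by
  rcases h with h | h <;> subst h
  · rw [← pow_add, ← two_mul, pow_mul]; norm_num
  · simp

lemma sign_pow_orth (i₀ : Fin n) (m : ℕ) :
    ((diagonal (fun i => if i = i₀ then (-1 : ℝ) else 1)) ^ m)ᵀ *
      (diagonal (fun i => if i = i₀ then (-1 : ℝ) else 1)) ^ m = 1 := by
  rw [sign_pow_eq, diagonal_transpose, diagonal_mul_diagonal, ← diagonal_one]
  have h : (fun i => (if i = i₀ then (-1:ℝ) else 1) ^ m * (if i = i₀ then (-1:ℝ) else 1) ^ m)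
      = fun _ => (1:ℝ) := funext fun i => sign_sq _ (by by_cases h : i = i₀ <;> simp [h]) m
  rw [h]

lemma sign_pow_conj (i₀ : Fin n) (m : ℕ) (x : Fin n → ℝ) :
    ((diagonal (fun i => if i = i₀ then (-1 : ℝ) else 1)) ^ m)ᵀ * diagonal x *
      (diagonal (fun i => if i = i₀ then (-1 : ℝ) else 1)) ^ m = diagonal x := by
  rw [sign_pow_eq, diagonal_transpose, diagonal_mul_diagonal, diagonal_mul_diagonal]
  have key : ∀ i, (if i = i₀ then (-1:ℝ) else 1) ^ m * x i * (if i = i₀ then (-1:ℝ) else 1) ^ m = x i := by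
    intro i
    have := sign_sq (if i = i₀ then (-1 : ℝ) else 1) (by by_cases h : i = i₀ <;> simp [h]) m
    calc (if i = i₀ then (-1:ℝ) else 1) ^ m * x i * (if i = i₀ then (-1:ℝ) else 1) ^ m
        = x i * ((if i = i₀ then (-1:ℝ) else 1) ^ m * (if i = i₀ then (-1:ℝ) else 1) ^ m) := by ring
      _ = x i := by rw [this, mul_one]
  rw [show (fun i => (if i = i₀ then (-1:ℝ) else 1) ^ m * x i * (if i = i₀ then (-1:ℝ) else 1) ^ m) = x from funext key]

/-! ### Reflections and Householder matrices -/

local notation "E" => EuclideanSpace ℝ (Fin n)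
local notation "ε" => WithLp.equiv 2 (Fin n → ℝ)

lemma reflection_formula (v x : E) :
    (Submodule.reflection (ℝ ∙ v)ᗮ x : E) = x - (2 * (inner ℝ v x : ℝ) / (inner ℝ v v : ℝ)) • v := by
  rw [Submodule.reflection_orthogonal_apply, Submodule.reflection_apply, Submodule.starProjection_singleton]
  simp only [RCLike.ofReal_real_eq_id, id_eq]
  rw [show (‖v‖ ^ 2 : ℝ) = (inner ℝ v v : ℝ) from (real_inner_self_eq_norm_sq v).symm]
  module

lemma inner_eq_dot (v x : E) :
    (inner ℝ v x : ℝ) = (ε v) ⬝ᵥ (ε x) := by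
  simp [PiLp.inner_apply, RCLike.inner_apply, dotProduct]
  exact Finset.sum_congr rfl fun _ _ => mul_comm _ _

lemma reflection_mulVec (v x : E) :
    ε (Submodule.reflection (ℝ ∙ v)ᗮ x) = Hmat (ε v) *ᵥ ε x := by
  rw [reflection_formula, Hmat_mulVec, inner_eq_dot, inner_eq_dot]
  simp

lemma reflection_list_mulVec (l : List E) (x : E) :
    ε (((l.map fun v => Submodule.reflection (ℝ ∙ v)ᗮ).prod) x) =
      ((l.map fun v => Hmat (ε v)).prod) *ᵥ ε x := by
  induction l with
  | nil => simp
  | cons v t ih =>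
    simp only [List.map_cons, List.prod_cons]
    rw [show ((Submodule.reflection (ℝ ∙ v)ᗮ * (t.map fun v => Submodule.reflection (ℝ ∙ v)ᗮ).prod) x)
        = Submodule.reflection (ℝ ∙ v)ᗮ (((t.map fun v => Submodule.reflection (ℝ ∙ v)ᗮ).prod) x) from rfl]
    rw [reflection_mulVec, ih, mulVec_mulVec]

/-- Every orthogonal matrix is a product of Householder matrices. -/
lemma exists_list (U : Matrix (Fin n) (Fin n) ℝ) (hU : Uᵀ * U = 1) :
    ∃ l : List (Fin n → ℝ), U = (l.map Hmat).prod := by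
  have hU' : U * Uᵀ = 1 := mul_eq_one_comm.mp hU
  have hinv : Invertible U := ⟨Uᵀ, hU, hU'⟩
  let e : (Fin n → ℝ) ≃ₗ[ℝ] (Fin n → ℝ) := U.toLinearEquiv' hinv
  let w : E ≃ₗ[ℝ] (Fin n → ℝ) := WithLp.linearEquiv 2 ℝ (Fin n → ℝ)
  let eE : E ≃ₗ[ℝ] E := (w.trans e).trans w.symm
  have heE : ∀ x : E, eE x = (ε).symm (U *ᵥ (ε x)) := fun x => rfl
  have hinner : ∀ x y : E, (inner ℝ (eE x) (eE y) : ℝ) = inner ℝ x y := by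
    intro x y
    rw [inner_eq_dot, inner_eq_dot, heE, heE]
    simp only [Equiv.apply_symm_apply]
    rw [dotProduct_mulVec, vecMul_mulVec, hU, vecMul_one]
  let φ : E ≃ₗᵢ[ℝ] E := eE.isometryOfInner hinner
  obtain ⟨l, -, hl⟩ := φ.reflections_generate_dim
  refine ⟨l.map (ε), ?_⟩
  have hmv : ∀ x : Fin n → ℝ, U *ᵥ x = ((l.map (ε)).map Hmat).prod *ᵥ x := by
    intro x
    have h1 := reflection_list_mulVec l ((ε).symm x)
    rw [← hl] at h1
    have h2 : φ ((ε).symm x) = eE ((ε).symm x) := rfl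
    rw [h2, heE] at h1
    simpa [List.map_map, Function.comp_def] using h1
  ext i j
  have := congrFun (hmv (Pi.single j 1)) i
  simpa using this

/-! ### Paths in the orthogonal group -/

lemma mem_orth_mul {A B : Matrix (Fin n) (Fin n) ℝ} (hA : Aᵀ * A = 1) (hB : Bᵀ * B = 1) :
    (A * B)ᵀ * (A * B) = 1 := by
  rw [transpose_mul, mul_assoc, ← mul_assoc Aᵀ, hA, one_mul, hB]

lemma continuous_dotSelf {X : Type*} [TopologicalSpace X] {f : X → (Fin n → ℝ)}
    (hf : Continuous f) : Continuous fun t => (f t) ⬝ᵥ (f t) := by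
  show Continuous fun t => ∑ i, f t i * f t i
  exact continuous_finset_sum _ fun i _ =>
    ((continuous_apply i).comp hf).mul ((continuous_apply i).comp hf)

lemma continuous_Hmat_comp {X : Type*} [TopologicalSpace X] {f : X → (Fin n → ℝ)}
    (hf : Continuous f) (hne : ∀ t, f t ≠ 0) :
    Continuous fun t => Hmat (f t) := by
  have hdot : Continuous fun t => (f t) ⬝ᵥ (f t) := continuous_dotSelf hf
  have hc : Continuous fun t => 2 / ((f t) ⬝ᵥ (f t)) :=
    continuous_const.div hdot fun t => by
      simpa [dotProduct_self_eq_zero] using hne t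
  have hvv : Continuous fun t => vecMulVec (f t) (f t) :=
    continuous_matrix fun i j => by
      simpa only [vecMulVec_apply, Pi.mul_def, Function.comp_def] using
        ((continuous_apply i).comp hf).mul ((continuous_apply j).comp hf)
  unfold Hmat
  exact continuous_const.sub (hc.smul hvv)

/-- Any product of Householder matrices is joined, within the orthogonal group, to a
power of the sign matrix `D = diag(-1,1,…,1)`. -/
lemma joined_list (hrank : 1 < Module.rank ℝ (Fin n → ℝ)) (i₀ : Fin n)
    (l : List (Fin n → ℝ)) :
    ∃ m : ℕ, JoinedIn {V : Matrix (Fin n) (Fin n) ℝ | Vᵀ * V = 1}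
      ((l.map Hmat).prod)
      ((diagonal (fun i => if i = i₀ then (-1 : ℝ) else 1)) ^ m) := by
  set D := diagonal (fun i => if i = i₀ then (-1 : ℝ) else 1) with hD
  set Orth := {V : Matrix (Fin n) (Fin n) ℝ | Vᵀ * V = 1} with hOrth
  induction l with
  | nil =>
    refine ⟨0, ?_⟩
    simp only [List.map_nil, List.prod_nil, pow_zero]
    exact JoinedIn.refl (by simp [hOrth])
  | cons v t ih =>
    obtain ⟨m, hm⟩ := ih
    simp only [List.map_cons, List.prod_cons]
    by_cases hv : v = 0
    · exact ⟨m, by simpa [hv, Hmat_zero] using hm⟩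
    · refine ⟨m + 1, ?_⟩
      have hDm : (D ^ m)ᵀ * D ^ m = 1 := sign_pow_orth i₀ m
      -- step 1 : multiply the path from `ih` on the left by `Hmat v`
      have step1 : JoinedIn Orth (Hmat v * (t.map Hmat).prod) (Hmat v * D ^ m) := by
        have hcont : Continuous fun V : Matrix (Fin n) (Fin n) ℝ => Hmat v * V :=
          continuous_const.matrix_mul continuous_id
        refine (hm.map hcont).mono ?_
        rintro X ⟨V, hV, rfl⟩
        exact mem_orth_mul (Hmat_orth v) hV
      -- step 2 : move `v` to `Pi.single i₀ 1` through nonzero vectors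
      have step2 : JoinedIn Orth (Hmat v * D ^ m) (Hmat (Pi.single i₀ 1) * D ^ m) := by
        have hpc : IsPathConnected ({(0 : Fin n → ℝ)}ᶜ) :=
          isPathConnected_compl_singleton_of_one_lt_rank hrank 0
        have hsingle : (Pi.single i₀ 1 : Fin n → ℝ) ≠ 0 := by
          intro h
          have := congrFun h i₀
          simp at this
        have hj : JoinedIn ({(0 : Fin n → ℝ)}ᶜ) v (Pi.single i₀ 1) :=
          hpc.joinedIn v (by simpa using hv) (Pi.single i₀ 1) (by simpa using hsingle)
        obtain ⟨p, hp⟩ := hj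
        have hcont : Continuous fun s : unitInterval => Hmat (p s) * D ^ m := by
          refine (continuous_Hmat_comp p.continuous ?_).matrix_mul continuous_const
          intro s
          simpa using hp s
        exact ⟨⟨⟨fun s => Hmat (p s) * D ^ m, hcont⟩, by simp, by simp⟩,
          fun s => mem_orth_mul (Hmat_orth _) hDm⟩
      have step3 : Hmat (Pi.single i₀ 1) * D ^ m = D ^ (m + 1) := by
        rw [Hmat_single, ← hD, pow_succ]
        exact ((Commute.pow_self D m).symm).eq
      rw [← step3]
      exact step1.trans step2

/-! ### Conjugation paths -/

/-- Conjugating `diagonal x` by an orthogonal matrix stays joined to `diagonal x`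
within the orbit of `diagonal x`. -/
lemma conj_joined (x : Fin n → ℝ) (U : Matrix (Fin n) (Fin n) ℝ) (hU : Uᵀ * U = 1) :
    JoinedIn {X : Matrix (Fin n) (Fin n) ℝ |
        ∃ V, Vᵀ * V = 1 ∧ X = Vᵀ * diagonal x * V}
      (Uᵀ * diagonal x * U) (diagonal x) := by
  rcases le_or_gt n 1 with h | h
  · have heq : Uᵀ * diagonal x * U = diagonal x := by
      interval_cases n
      · ext i j
        exact i.elim0
      · ext i j
        have hi : i = 0 := Subsingleton.elim i 0
        have hj : j = 0 := Subsingleton.elim j 0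
        subst hi; subst hj
        have h00 : U 0 0 * U 0 0 = 1 := by
          have := congrFun (congrFun hU 0) 0
          simpa [Matrix.mul_apply, Fin.sum_univ_one, Matrix.one_apply] using this
        simp only [Matrix.mul_apply, Fin.sum_univ_one, transpose_apply, diagonal_apply_eq]
        calc U 0 0 * x 0 * U 0 0 = x 0 * (U 0 0 * U 0 0) := by ring
          _ = x 0 := by rw [h00, mul_one]
    rw [heq]
    exact JoinedIn.refl ⟨1, by simp, by simp⟩
  · have hrank : 1 < Module.rank ℝ (Fin n → ℝ) := by
      rw [rank_fin_fun]
      exact_mod_cast h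
    have i₀ : Fin n := ⟨0, by omega⟩
    obtain ⟨l, hl⟩ := exists_list U hU
    obtain ⟨m, hm⟩ := joined_list hrank i₀ l
    rw [← hl] at hm
    have hcont : Continuous fun V : Matrix (Fin n) (Fin n) ℝ =>
        Vᵀ * diagonal x * V :=
      ((continuous_id.matrix_transpose).matrix_mul continuous_const).matrix_mul continuous_id
    have := hm.map hcont
    rw [sign_pow_conj i₀ m x] at this
    refine this.mono ?_
    rintro X ⟨V, hV, rfl⟩
    exact ⟨V, hV, rfl⟩

/-! ### Permutation matrices -/

lemma permMat_orth (σ : Equiv.Perm (Fin n)) :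
    (σ.toPEquiv.toMatrix : Matrix (Fin n) (Fin n) ℝ)ᵀ * σ.toPEquiv.toMatrix = 1 := by
  rw [← PEquiv.toMatrix_symm, ← PEquiv.toMatrix_trans, ← Equiv.toPEquiv_symm,
    ← Equiv.toPEquiv_trans]
  simp

lemma permMat_conj (σ : Equiv.Perm (Fin n)) (x : Fin n → ℝ) :
    (σ.toPEquiv.toMatrix : Matrix (Fin n) (Fin n) ℝ)ᵀ * diagonal x * σ.toPEquiv.toMatrix =
      diagonal (x ∘ σ.symm) := by
  rw [PEquiv.mul_toMatrix_toPEquiv, ← PEquiv.toMatrix_symm, ← Equiv.toPEquiv_symm,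
    PEquiv.toMatrix_toPEquiv_mul]
  ext i j
  by_cases h : i = j
  · subst h
    simp
  · simp only [submatrix_apply, id_eq]
    rw [diagonal_apply_ne _ h, diagonal_apply_ne _ (fun hc => h (σ.symm.injective hc))]

end PCL

end PCLAux

/-- Path-connected lifts: if `M ⊂ ℝⁿ` is path-connected and every coordinate permutation
either preserves `M` or moves it off itself, then the spectral lift `λ⁻¹(M^sym)` of the
symmetrization `M^sym = ⋃_σ σM` is a path-connected set of symmetric matrices. -/
theorem path_connected_lift (n : ℕ) (M : Set (Fin n → ℝ)) (hM : IsPathConnected M)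
    (hperm : ∀ σ : Equiv.Perm (Fin n),
      (fun x : Fin n → ℝ => x ∘ σ) '' M = M ∨
      Disjoint ((fun x : Fin n → ℝ => x ∘ σ) '' M) M) :
    IsPathConnected {X : Matrix (Fin n) (Fin n) ℝ |
      ∃ (x : Fin n → ℝ) (U : Matrix (Fin n) (Fin n) ℝ),
        (∃ σ : Equiv.Perm (Fin n), x ∘ σ ∈ M) ∧
        Uᵀ * U = 1 ∧ X = Uᵀ * Matrix.diagonal x * U} := by
  classical
  obtain ⟨y₀, hy₀, -⟩ := id hM
  set S := {X : Matrix (Fin n) (Fin n) ℝ |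
      ∃ (x : Fin n → ℝ) (U : Matrix (Fin n) (Fin n) ℝ),
        (∃ σ : Equiv.Perm (Fin n), x ∘ σ ∈ M) ∧
        Uᵀ * U = 1 ∧ X = Uᵀ * Matrix.diagonal x * U} with hS
  have hdiagS : ∀ z ∈ M, Matrix.diagonal z ∈ S := by
    intro z hz
    exact ⟨z, 1, ⟨Equiv.refl _, by simpa using hz⟩, by simp, by simp⟩
  refine ⟨Matrix.diagonal y₀, hdiagS y₀ hy₀, ?_⟩
  intro Y hY
  rw [hS] at hY
  obtain ⟨x, U, ⟨σ, hxσ⟩, hU, rfl⟩ := hY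
  have horb : {X : Matrix (Fin n) (Fin n) ℝ |
      ∃ V, Vᵀ * V = 1 ∧ X = Vᵀ * Matrix.diagonal x * V} ⊆ S := by
    rintro X ⟨V, hV, rfl⟩
    exact ⟨x, V, ⟨σ, hxσ⟩, hV, rfl⟩
  have J1 : JoinedIn S (Uᵀ * Matrix.diagonal x * U) (Matrix.diagonal x) :=
    (PCL.conj_joined x U hU).mono horb
  have J2 : JoinedIn S (Matrix.diagonal (x ∘ σ)) (Matrix.diagonal x) := by
    have := (PCL.conj_joined x (σ.symm.toPEquiv.toMatrix) (PCL.permMat_orth σ.symm)).mono horb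
    rwa [PCL.permMat_conj σ.symm x, Equiv.symm_symm] at this
  have J3 : JoinedIn S (Matrix.diagonal (x ∘ σ)) (Matrix.diagonal y₀) := by
    have hjM : JoinedIn M (x ∘ σ) y₀ := hM.joinedIn _ hxσ _ hy₀
    have := hjM.map (f := fun z : Fin n → ℝ => Matrix.diagonal z)
      (continuous_id.matrix_diagonal)
    refine this.mono ?_
    rintro X ⟨z, hz, rfl⟩
    exact hdiagS z hz
  exact (J1.trans (J2.symm.trans J3)).symm
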